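/- For n ≤ k and a sequence ε = ε₁…ε_n ∈ {0,…,D-1}^n, the refined quantum partition operator P_ε = P_{ε_n}(n-1) ∘ … ∘ P_{ε₁} on (ℂ^D)^{⊗k} equals the orthogonal projector π_{ε₁} ⊗ π_{ε₂} ⊗ … ⊗ π_{ε_n} ⊗ I^{⊗(k-n)}. In particular, the operators {P_ε : |ε| = n} are mutually orthogonal projectors summing to the identity. -/

import Mathlib

open scoped BigOperators Matrix
open scoped BigOperators Matrix

/-- The `D`-dimensional discrete Fourier transform, with entries
`(F_D)_{jk} = D^{-1/2} e^{-2πi jk/D}`. -/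
noncomputable def dft (D : ℕ) : Matrix (Fin D) (Fin D) ℂ :=
  fun j k => (1 / Real.sqrt D : ℝ) *
    Complex.exp (-2 * Real.pi * Complex.I * ((j : ℕ) : ℂ) * ((k : ℕ) : ℂ) / (D : ℂ))

/-- The Walsh-quantized baker `B_k` on `(ℂ^D)^{⊗k} ≅ ℂ^{D^k}`, as a matrix:
`B_k(v⁽¹⁾ ⊗ … ⊗ v⁽ᵏ⁾) = v⁽²⁾ ⊗ … ⊗ v⁽ᵏ⁾ ⊗ F_D^* v⁽¹⁾`. -/
noncomputable def bakerMatrix (D k : ℕ) (hk : 0 < k) :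
    Matrix (Fin k → Fin D) (Fin k → Fin D) ℂ :=
  fun s t => ∏ i : Fin k,
    if h : (i : ℕ) + 1 < k then (if s i = t ⟨(i : ℕ) + 1, h⟩ then 1 else 0)
    else ((dft D)ᴴ) (s i) (t ⟨0, hk⟩)

/-- The projector `P_ε = π_ε ⊗ I^{⊗(k-1)}` onto the cylinder `[·ε]`, `ε ∈ {0,…,D-1}`. -/
noncomputable def cylProj (D k : ℕ) (hk : 0 < k) (a : Fin D) :
    Matrix (Fin k → Fin D) (Fin k → Fin D) ℂ :=
  fun s t => if s = t ∧ s ⟨0, hk⟩ = a then 1 else 0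

/-- The evolved projector `P_ε(l) = B_k^{-l} P_ε B_k^{l}`. -/
noncomputable def cylProjAt (D k : ℕ) (hk : 0 < k) (a : Fin D) (l : ℕ) :
    Matrix (Fin k → Fin D) (Fin k → Fin D) ℂ :=
  (bakerMatrix D k hk)⁻¹ ^ l * cylProj D k hk a * (bakerMatrix D k hk) ^ l

/-- The refined quantum partition operator
`P_ε = P_{ε_n}(n-1) ∘ … ∘ P_{ε₂}(1) ∘ P_{ε₁}` associated with a word `ε = ε₁…ε_n`. -/
noncomputable def wordOp (D k : ℕ) (hk : 0 < k) :
    (n : ℕ) → (Fin n → Fin D) → Matrix (Fin k → Fin D) (Fin k → Fin D) ℂ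
  | 0, _ => 1
  | n + 1, ε => cylProjAt D k hk (ε (Fin.last n)) n * wordOp D k hk n (fun i => ε i.castSucc)



-- Auxiliary lemmas

open Complex in
lemma dft_col_orth {D : ℕ} (hD : 0 < D) (m m' : Fin D) :
    ∑ x : Fin D, (dft D)ᴴ m x * (starRingEnd ℂ) ((dft D)ᴴ m' x) =
      if m = m' then 1 else 0 := by
  have hD0 : (D : ℂ) ≠ 0 := Nat.cast_ne_zero.mpr hD.ne'
  set ζ : ℂ := Complex.exp ((((m : ℕ) : ℂ) - ((m' : ℕ) : ℂ)) * (2 * Real.pi * I) / D) with hζ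
  have hterm : ∀ x : Fin D,
      (dft D)ᴴ m x * (starRingEnd ℂ) ((dft D)ᴴ m' x) = (1 / (D : ℂ)) * ζ ^ (x : ℕ) := by
    intro x
    rw [Matrix.conjTranspose_apply, Matrix.conjTranspose_apply, starRingEnd_apply, star_star,
      show star (dft D x m) = (starRingEnd ℂ) (dft D x m) from rfl]
    simp only [dft, map_mul, Complex.conj_ofReal, ← Complex.exp_conj, map_div₀, map_neg,
      Complex.conj_I, Complex.conj_natCast, map_ofNat]
    rw [hζ, ← Complex.exp_nat_mul, mul_mul_mul_comm, ← Complex.exp_add]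
    have h1 : ((1 / Real.sqrt D : ℝ) : ℂ) * ((1 / Real.sqrt D : ℝ) : ℂ) = 1 / (D : ℂ) := by
      rw [← Complex.ofReal_mul]
      rw [div_mul_div_comm, one_mul, Real.mul_self_sqrt (Nat.cast_nonneg D)]
      push_cast
      ring
    rw [h1]
    congr 1
    field_simp
    ring
  simp only [hterm]
  rw [← Finset.mul_sum]
  by_cases h : m = m'
  · subst h
    have hz : ζ = 1 := by rw [hζ]; simp
    rw [if_pos rfl]
    simp only [hz, one_pow, Finset.sum_const, Finset.card_univ, Fintype.card_fin, nsmul_eq_mul,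
      mul_one]
    field_simp
  · rw [if_neg h]
    have hsum : ∑ x : Fin D, ζ ^ (x : ℕ) = ∑ x ∈ Finset.range D, ζ ^ x :=
      Fin.sum_univ_eq_sum_range _ _
    have hζD : ζ ^ D = 1 := by
      rw [hζ, ← Complex.exp_nat_mul]
      have h2 : (D : ℂ) * ((((m : ℕ) : ℂ) - ((m' : ℕ) : ℂ)) * (2 * Real.pi * I) / D) =
          ((((m : ℤ) - (m' : ℤ) : ℤ) : ℂ)) * (2 * Real.pi * I) := by
        push_cast
        field_simp
      rw [h2, Complex.exp_int_mul_two_pi_mul_I]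
    have hζ1 : ζ ≠ 1 := by
      intro hc
      rw [hζ, Complex.exp_eq_one_iff] at hc
      obtain ⟨n, hn⟩ := hc
      have h2π : (2 * (Real.pi : ℂ) * I) ≠ 0 :=
        mul_ne_zero (mul_ne_zero two_ne_zero (Complex.ofReal_ne_zero.mpr Real.pi_ne_zero))
          Complex.I_ne_zero
      have h4 : (((((m : ℕ) : ℂ) - ((m' : ℕ) : ℂ)) / D)) * (2 * Real.pi * I) =
          (n : ℂ) * (2 * Real.pi * I) := by rw [← hn]; ring
      have h5 := mul_right_cancel₀ h2π h4
      rw [div_eq_iff hD0] at h5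
      have hZ : ((m : ℕ) : ℤ) - ((m' : ℕ) : ℤ) = n * (D : ℤ) := by exact_mod_cast h5
      have hdvd : ((D : ℤ)) ∣ (((m : ℕ) : ℤ) - ((m' : ℕ) : ℤ)) := ⟨n, by linarith⟩
      have habs : |(((m : ℕ) : ℤ) - ((m' : ℕ) : ℤ))| < (D : ℤ) := by
        have h1 := m.isLt
        have h2 := m'.isLt
        rw [abs_lt]
        omega
      have h0 := Int.eq_zero_of_abs_lt_dvd hdvd habs
      have hm : (m : ℕ) ≠ (m' : ℕ) := fun he => h (Fin.ext he)
      omega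
    rw [hsum, geom_sum_eq hζ1, hζD]
    simp

/-- factor function -/
noncomputable def bfac (D k : ℕ) (s : Fin k → Fin D) (i : Fin k) (x : Fin D) : ℂ :=
  if (i : ℕ) + 1 < k then (if s i = x then 1 else 0) else ((dft D)ᴴ) (s i) x

lemma baker_apply (D k : ℕ) (hk : 0 < k) (s t : Fin k → Fin D) :
    bakerMatrix D k hk s t = ∏ i : Fin k, bfac D k s i (t (finRotate k i)) := by
  rcases k with _ | k'
  · exact absurd hk (lt_irrefl 0)
  refine Finset.prod_congr rfl fun i _ => ?_
  by_cases h : (i : ℕ) + 1 < k' + 1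
  · rw [dif_pos h, bfac, if_pos h]
    have : finRotate (k' + 1) i = ⟨(i : ℕ) + 1, h⟩ := by
      rw [finRotate_succ_apply]
      apply Fin.ext
      rw [Fin.val_add_one]
      rw [if_neg]
      intro he
      rw [he] at h
      simp [Fin.last] at h
    rw [this]
  · rw [dif_neg h, bfac, if_neg h]
    have : finRotate (k' + 1) i = ⟨0, hk⟩ := by
      rw [finRotate_succ_apply]
      apply Fin.ext
      rw [Fin.val_add_one]
      rw [if_pos]
      apply Fin.ext
      have := i.isLt
      simp only [Fin.val_last]
      omega
    rw [this]

lemma baker_unitary (D k : ℕ) (hk : 0 < k) :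
    bakerMatrix D k hk * (bakerMatrix D k hk)ᴴ = 1 := by
  ext s s'
  rw [Matrix.mul_apply]
  have hD : 0 < D := (s ⟨0, hk⟩).pos
  have hterm : ∀ t : Fin k → Fin D,
      bakerMatrix D k hk s t * (bakerMatrix D k hk)ᴴ t s' =
        ∏ i : Fin k, (bfac D k s i (t (finRotate k i)) *
          (starRingEnd ℂ) (bfac D k s' i (t (finRotate k i)))) := by
    intro t
    rw [Matrix.conjTranspose_apply, baker_apply, baker_apply,
      show star (∏ i : Fin k, bfac D k s' i (t (finRotate k i))) =
        (starRingEnd ℂ) (∏ i : Fin k, bfac D k s' i (t (finRotate k i))) from rfl,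
      map_prod, ← Finset.prod_mul_distrib]
  simp only [hterm]
  rw [show (∑ t : Fin k → Fin D, ∏ i : Fin k, (bfac D k s i (t (finRotate k i)) *
      (starRingEnd ℂ) (bfac D k s' i (t (finRotate k i))))) =
    ∑ t : Fin k → Fin D, ∏ i : Fin k, (bfac D k s i (t i) *
      (starRingEnd ℂ) (bfac D k s' i (t i))) from ?_]
  · rw [← Fintype.prod_sum (fun (i : Fin k) (x : Fin D) =>
      bfac D k s i x * (starRingEnd ℂ) (bfac D k s' i x))]
    have hfac : ∀ i : Fin k, (∑ x : Fin D, bfac D k s i x * (starRingEnd ℂ) (bfac D k s' i x)) =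
        if s i = s' i then 1 else 0 := by
      intro i
      by_cases h : (i : ℕ) + 1 < k
      · simp only [bfac, if_pos h, apply_ite (starRingEnd ℂ), map_one, map_zero, ite_mul,
          mul_ite, one_mul, mul_one, mul_zero, zero_mul]
        rw [Finset.sum_ite_eq (Finset.univ) (s' i) (fun x => if s i = x then (1:ℂ) else 0)]
        simp
      · simp only [bfac, if_neg h]
        rw [dft_col_orth hD]
    simp only [hfac]
    rw [Finset.prod_boole]
    rw [Matrix.one_apply]
    congr 1
    simp [funext_iff, eq_comm]
  · refine Fintype.sum_bijective (fun t => t ∘ finRotate k)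
      ((Equiv.arrowCongr (finRotate k).symm (Equiv.refl (Fin D))).bijective) _ _ fun t => ?_
    rfl

/-- projection onto `s l = a` at slot `l`. -/
noncomputable def projAt (D k : ℕ) (l : ℕ) (hl : l < k) (a : Fin D) :
    Matrix (Fin k → Fin D) (Fin k → Fin D) ℂ :=
  fun s t => if s = t ∧ s ⟨l, hl⟩ = a then 1 else 0

lemma baker_inv_mul (D k : ℕ) (hk : 0 < k) :
    (bakerMatrix D k hk)⁻¹ * bakerMatrix D k hk = 1 := by
  have h := baker_unitary D k hk
  rw [Matrix.inv_eq_right_inv h]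
  exact mul_eq_one_comm.mp h

lemma baker_swap (D k : ℕ) (hk : 0 < k) (a : Fin D) (l : ℕ) (h : l + 1 < k) :
    bakerMatrix D k hk * projAt D k (l + 1) h a =
      projAt D k l (Nat.lt_of_succ_lt h) a * bakerMatrix D k hk := by
  ext s t
  rw [Matrix.mul_apply, Matrix.mul_apply]
  have hL : (∑ u, bakerMatrix D k hk s u * projAt D k (l+1) h a u t) =
      (if t ⟨l+1, h⟩ = a then bakerMatrix D k hk s t else 0) := by
    simp only [projAt]
    rw [Finset.sum_eq_single t]
    · by_cases hta : t ⟨l+1, h⟩ = a <;> simp [hta]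
    · intro u _ hu
      simp [hu]
    · simp
  have hR : (∑ u, projAt D k l (Nat.lt_of_succ_lt h) a s u * bakerMatrix D k hk u t) =
      (if s ⟨l, Nat.lt_of_succ_lt h⟩ = a then bakerMatrix D k hk s t else 0) := by
    simp only [projAt]
    rw [Finset.sum_eq_single s]
    · by_cases hsa : s ⟨l, Nat.lt_of_succ_lt h⟩ = a <;> simp [hsa]
    · intro u _ hu
      simp [Ne.symm hu]
    · simp
  rw [hL, hR]
  by_cases he : s ⟨l, Nat.lt_of_succ_lt h⟩ = t ⟨l+1, h⟩
  · rw [he]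
  · have hB : bakerMatrix D k hk s t = 0 := by
      rw [bakerMatrix]
      refine Finset.prod_eq_zero (Finset.mem_univ (⟨l, Nat.lt_of_succ_lt h⟩ : Fin k)) ?_
      rw [dif_pos h, if_neg he]
    rw [hB]
    simp

lemma cylProjAt_eq (D k : ℕ) (hk : 0 < k) (a : Fin D) (l : ℕ) (hl : l < k) :
    cylProjAt D k hk a l = projAt D k l hl a := by
  induction l with
  | zero =>
    rw [cylProjAt, pow_zero, pow_zero, Matrix.one_mul, Matrix.mul_one]
    rfl
  | succ l ih =>
    have hl' : l < k := Nat.lt_of_succ_lt hl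
    rw [cylProjAt, pow_succ', pow_succ]
    have : (bakerMatrix D k hk)⁻¹ * (bakerMatrix D k hk)⁻¹ ^ l * cylProj D k hk a *
        ((bakerMatrix D k hk) ^ l * bakerMatrix D k hk) =
        (bakerMatrix D k hk)⁻¹ * (cylProjAt D k hk a l) * bakerMatrix D k hk := by
      rw [cylProjAt]
      noncomm_ring
    rw [this, ih hl', Matrix.mul_assoc,
      show projAt D k l hl' a * bakerMatrix D k hk =
        bakerMatrix D k hk * projAt D k (l + 1) hl a from (baker_swap D k hk a l hl).symm,
      ← Matrix.mul_assoc, baker_inv_mul, Matrix.one_mul]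

lemma wordOp_formula (D k : ℕ) (hk : 0 < k) :
    ∀ (n : ℕ) (hn : n ≤ k) (ε : Fin n → Fin D),
      wordOp D k hk n ε =
        fun s t => if s = t ∧ ∀ i : Fin n, s (Fin.castLE hn i) = ε i then (1 : ℂ) else 0 := by
  intro n
  induction n with
  | zero =>
    intro hn ε
    ext s t
    show (1 : Matrix (Fin k → Fin D) (Fin k → Fin D) ℂ) s t = _
    rw [Matrix.one_apply]
    simp
  | succ n ih =>
    intro hn ε
    have hn' : n ≤ k := Nat.le_of_succ_le hn
    have hnk : n < k := Nat.lt_of_lt_of_le (Nat.lt_succ_self n) hn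
    show cylProjAt D k hk (ε (Fin.last n)) n * wordOp D k hk n (fun i => ε i.castSucc) = _
    rw [cylProjAt_eq D k hk _ n hnk, ih hn']
    ext s t
    erw [Matrix.mul_apply]
    have hiff : (∀ i : Fin (n + 1), s (Fin.castLE hn i) = ε i) ↔
        (s ⟨n, hnk⟩ = ε (Fin.last n) ∧
          ∀ i : Fin n, s (Fin.castLE hn' i) = ε i.castSucc) := by
      constructor
      · intro hp
        exact ⟨hp (Fin.last n), fun i => hp i.castSucc⟩
      · intro hp i
        refine Fin.lastCases ?_ (fun j => ?_) i
        · exact hp.1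
        · exact hp.2 j
    rw [Finset.sum_eq_single s]
    · simp only [projAt, hiff]
      by_cases hst : s = t
      · subst hst
        by_cases h1 : s ⟨n, hnk⟩ = ε (Fin.last n) <;>
          by_cases h2 : ∀ i : Fin n, s (Fin.castLE hn' i) = ε i.castSucc <;>
            simp [h1, h2]
      · simp [hst]
    · intro u _ hu
      simp [projAt, Ne.symm hu]
    · simp

/-- For `n ≤ k`, the refined quantum partition operator `P_ε` equals the orthogonal
projector `π_{ε₁} ⊗ … ⊗ π_{ε_n} ⊗ I^{⊗(k-n)}`; in particular the operators
`{P_ε : |ε| = n}` are mutually orthogonal projectors summing to the identity. -/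
theorem wordOp_eq_tensor_projector {D k n : ℕ} (hD : 0 < D) (hk : 0 < k) (hn : n ≤ k)
    (ε : Fin n → Fin D) :
    (wordOp D k hk n ε =
        fun s t => if s = t ∧ ∀ i : Fin n, s (Fin.castLE hn i) = ε i then (1 : ℂ) else 0) ∧
      (∑ ε' : Fin n → Fin D, wordOp D k hk n ε' = 1) ∧
      (∀ ε₁ ε₂ : Fin n → Fin D,
        wordOp D k hk n ε₁ * wordOp D k hk n ε₂ =
          if ε₁ = ε₂ then wordOp D k hk n ε₁ else 0) := by
  have hfor := wordOp_formula D k hk n hn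
  refine ⟨hfor ε, ?_, ?_⟩
  · ext s t
    rw [Matrix.sum_apply]
    simp only [hfor]
    rw [Matrix.one_apply]
    by_cases hst : s = t
    · subst hst
      simp only [true_and, if_pos rfl]
      rw [Finset.sum_eq_single (fun i => s (Fin.castLE hn i))]
      · simp
      · intro ε' _ hne
        rw [if_neg]
        intro hq
        exact hne (funext fun i => (hq i).symm)
      · simp
    · simp [hst]
  · intro ε₁ ε₂
    have hmul : ∀ s t, (wordOp D k hk n ε₁ * wordOp D k hk n ε₂) s t =
        if s = t ∧ (∀ i : Fin n, s (Fin.castLE hn i) = ε₁ i) ∧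
            (∀ i : Fin n, s (Fin.castLE hn i) = ε₂ i) then (1 : ℂ) else 0 := by
      intro s t
      rw [Matrix.mul_apply]
      simp only [hfor]
      rw [Finset.sum_eq_single s]
      · by_cases hst : s = t
        · subst hst
          by_cases h1 : ∀ i : Fin n, s (Fin.castLE hn i) = ε₁ i <;>
            by_cases h2 : ∀ i : Fin n, s (Fin.castLE hn i) = ε₂ i <;>
              simp [h1, h2]
        · simp [hst]
      · intro u _ hu
        simp [Ne.symm hu]
      · simp
    by_cases he : ε₁ = ε₂
    · subst he
      rw [if_pos rfl]
      ext s t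
      rw [hmul, hfor]
      simp [and_assoc]
    · rw [if_neg he]
      ext s t
      rw [hmul, Matrix.zero_apply]
      rw [if_neg]
      rintro ⟨-, h1, h2⟩
      exact he (funext fun i => (h1 i).symm.trans (h2 i))
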